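/- Let p be a prime and let F be a closed subset of the ring ℤ_p of p-adic integers. Then the upper Banach density of the projection Π_p(F) = F ∩ ℤ satisfies d*(F ∩ ℤ) ≤ μ_p(F), where μ_p is the Haar probability measure on ℤ_p. -/

import Mathlib

open MeasureTheory Filter Set Metric
open scoped ENNReal NNReal
open scoped Topology

noncomputable section

/-- Number of elements of `E` in the integer interval `(M, M+n]`. -/
def cnt (E : Set ℤ) (M : ℤ) (n : ℕ) : ℕ := (E ∩ Set.Ioc M (M + n)).ncard

/-- The `s`-counting measure `ℋ_s(E) = limsup_{|I|→∞} |E ∩ I| / |I|^s`,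
where `I` ranges over integer intervals `(M, N]`. -/
def countingMeasure (s : ℝ) (E : Set ℤ) : ℝ≥0∞ :=
  Filter.atTop.limsup fun n : ℕ => ⨆ M : ℤ, (cnt E M n : ℝ≥0∞) / (n : ℝ≥0∞) ^ s

/-- The upper Banach density `d*(E) = limsup_{|I|→∞} |E ∩ I| / |I|`. -/
def upperBanachDensity (E : Set ℤ) : ℝ≥0∞ := countingMeasure 1 E

variable (p : ℕ) [Fact p.Prime]

instance : MeasurableSpace ℤ_[p] := borel ℤ_[p]
instance : BorelSpace ℤ_[p] := ⟨rfl⟩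

/-- Projection `Π_p(F) = F ∩ ℤ` of a set `F ⊆ ℤ_p`, as a set of integers. -/
def proj (F : Set ℤ_[p]) : Set ℤ := {m : ℤ | (m : ℤ_[p]) ∈ F}

/-- The closed ball of radius `p^{-n}` around `x` in `ℤ_p`. -/
def pball (x : ℤ_[p]) (n : ℕ) : Set ℤ_[p] := Metric.closedBall x ((p : ℝ) ^ (-(n : ℤ)))

/-- `limsup_{|I|→∞} |A ∩ B ∩ I| / |B ∩ I|^s` for sets of integers `A, B`. -/
def relCount (s : ℝ) (A B : Set ℤ) : ℝ≥0∞ :=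
  Filter.atTop.limsup fun n : ℕ => ⨆ M : ℤ, (cnt (A ∩ B) M n : ℝ≥0∞) / (cnt B M n : ℝ≥0∞) ^ s

/-- `η_s(F; x, n) = limsup_{|I|→∞} |F ∩ B_{p^{-n}}(x) ∩ I| / |B_{p^{-n}}(x) ∩ I|^s`. -/
def etaN (s : ℝ) (F : Set ℤ_[p]) (x : ℤ_[p]) (n : ℕ) : ℝ≥0∞ :=
  relCount s (proj p F) (proj p (pball p x n))

/-- The `s`-counting local measure `η_s(F; x) = limsup_{n→∞} η_s(F; x, n)`. -/
def eta (s : ℝ) (F : Set ℤ_[p]) (x : ℤ_[p]) : ℝ≥0∞ :=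
  Filter.atTop.limsup fun n : ℕ => etaN p s F x n

/-- `N_{p^{-n}}(F)`: minimal number of closed balls of radius `p^{-n}` covering `F`. -/
def coverNumber (F : Set ℤ_[p]) (n : ℕ) : ℕ :=
  sInf {k : ℕ | ∃ t : Finset ℤ_[p], t.card = k ∧
    F ⊆ ⋃ x ∈ t, Metric.closedBall x ((p : ℝ) ^ (-(n : ℤ)))}

/-- Upper box-counting dimension of `F ⊆ ℤ_p`. -/
def upperBoxDim (F : Set ℤ_[p]) : ℝ :=
  Filter.atTop.limsup fun n : ℕ => Real.log (coverNumber p F n) / (n * Real.log p)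

/-- Lower box-counting dimension of `F ⊆ ℤ_p`. -/
def lowerBoxDim (F : Set ℤ_[p]) : ℝ :=
  Filter.atTop.liminf fun n : ℕ => Real.log (coverNumber p F n) / (n * Real.log p)

/-- Maximal number of points of `E` in an integer interval of length `n`. -/
def maxCnt (E : Set ℤ) (n : ℕ) : ℕ := sSup {k : ℕ | ∃ M : ℤ, cnt E M n = k}

/-- The counting dimension `D(E) = limsup_{|I|→∞} log |E ∩ I| / log |I|`. -/
def countingDim (E : Set ℤ) : ℝ :=
  Filter.atTop.limsup fun n : ℕ => Real.log (maxCnt E n) / Real.log n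

/-- `θ̲*^s(F) = limsup_n min_{a ∈ G_n} ℋ^s(F ∩ B_{p^{-n}}(a)) / p^{-ns}`, where the
minimum runs over residues `a` whose ball `B_{p^{-n}}(a)` meets `F`. -/
def thetaStar (s : ℝ) (F : Set ℤ_[p]) : ℝ≥0∞ :=
  Filter.atTop.limsup fun n : ℕ =>
    ⨅ (a : ℤ) (_ : (pball p (a : ℤ_[p]) n ∩ F).Nonempty),
      μH[s] (F ∩ pball p (a : ℤ_[p]) n) / (p : ℝ≥0∞) ^ (-((n : ℝ) * s))

/-- A finite arithmetic progression in `ℤ` with common difference `d`. -/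
def IsAPWithDiff (A : Set ℤ) (d : ℤ) : Prop :=
  ∃ a : ℤ, ∃ L : ℕ, A = (fun i : ℕ => a + d * (i : ℤ)) '' {i : ℕ | i < L}

namespace BDH

lemma ball_subset {x y : ℤ_[p]} {n : ℕ} (h : ‖x - y‖ ≤ (p:ℝ)^(-(n:ℤ))) :
    closedBall x ((p:ℝ)^(-(n:ℤ))) ⊆ closedBall y ((p:ℝ)^(-(n:ℤ))) := by
  intro z hz
  rw [mem_closedBall, dist_eq_norm] at hz ⊢
  have : z - y = (z - x) + (x - y) := by ring
  rw [this]
  exact le_trans (PadicInt.nonarchimedean _ _) (max_le hz h)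

lemma ball_eq {x y : ℤ_[p]} {n : ℕ} (h : ‖x - y‖ ≤ (p:ℝ)^(-(n:ℤ))) :
    closedBall x ((p:ℝ)^(-(n:ℤ))) = closedBall y ((p:ℝ)^(-(n:ℤ))) := by
  refine subset_antisymm (ball_subset p h) (ball_subset p ?_)
  rwa [norm_sub_rev]

lemma int_mem_ball {m a : ℤ} {n : ℕ} :
    ((m : ℤ_[p]) ∈ closedBall (a : ℤ_[p]) ((p:ℝ)^(-(n:ℤ)))) ↔ (p ^ n : ℤ) ∣ (m - a) := by
  rw [mem_closedBall, dist_eq_norm]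
  have : (m : ℤ_[p]) - (a : ℤ_[p]) = ((m - a : ℤ) : ℤ_[p]) := by push_cast; ring
  rw [this, PadicInt.norm_int_le_pow_iff_dvd]

lemma pairwise_disjoint_balls (n : ℕ) :
    (↑(Finset.Ico (0:ℤ) ((p:ℤ)^n)) : Set ℤ).PairwiseDisjoint
      (fun a : ℤ => closedBall (a : ℤ_[p]) ((p:ℝ)^(-(n:ℤ)))) := by
  intro a ha b hb hab
  simp only [Finset.coe_Ico, Set.mem_Ico] at ha hb
  rw [Function.onFun, Set.disjoint_left]
  intro z hza hzb
  rw [mem_closedBall, dist_eq_norm] at hza hzb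
  have hnorm : ‖(a : ℤ_[p]) - b‖ ≤ (p:ℝ)^(-(n:ℤ)) := by
    have : (a : ℤ_[p]) - b = -(z - a) + (z - b) := by ring
    rw [this]
    refine le_trans (PadicInt.nonarchimedean _ _) (max_le ?_ hzb)
    rwa [norm_neg]
  have hdvd : (p ^ n : ℤ) ∣ (a - b) := by
    have : ((a : ℤ) : ℤ_[p]) ∈ closedBall ((b:ℤ) : ℤ_[p]) ((p:ℝ)^(-(n:ℤ))) := by
      rw [mem_closedBall, dist_eq_norm]; exact hnorm
    exact (int_mem_ball p).mp this
  have : a - b = 0 := by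
    refine Int.eq_zero_of_abs_lt_dvd hdvd ?_
    rw [abs_lt]
    constructor <;> omega
  exact hab (by omega)

lemma ball_cover (n : ℕ) (z : ℤ_[p]) :
    ∃ a : ℤ, (0 ≤ a ∧ a < (p:ℤ)^n) ∧ z ∈ closedBall (a : ℤ_[p]) ((p:ℝ)^(-(n:ℤ))) := by
  refine ⟨(z.appr n : ℤ), ⟨Int.ofNat_nonneg _, by exact_mod_cast z.appr_lt n⟩, ?_⟩
  rw [mem_closedBall, dist_eq_norm]
  have : ((z.appr n : ℤ) : ℤ_[p]) = ((z.appr n : ℕ) : ℤ_[p]) := by norm_cast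
  rw [this, PadicInt.norm_le_pow_iff_mem_span_pow]
  exact z.appr_spec n

lemma measure_ball (μ : Measure ℤ_[p]) [μ.IsAddHaarMeasure] [IsProbabilityMeasure μ]
    (x : ℤ_[p]) (n : ℕ) :
    μ (closedBall x ((p:ℝ)^(-(n:ℤ)))) = ((p : ℝ≥0∞) ^ n)⁻¹ := by
  have hppos := (Fact.out : p.Prime).pos
  have htrans : ∀ y : ℤ_[p], μ (closedBall y ((p:ℝ)^(-(n:ℤ)))) =
      μ (closedBall 0 ((p:ℝ)^(-(n:ℤ)))) := by
    intro y
    have hpre : (fun h => y + h) ⁻¹' closedBall y ((p:ℝ)^(-(n:ℤ)))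
        = closedBall 0 ((p:ℝ)^(-(n:ℤ))) := by
      ext z
      simp [mem_closedBall, dist_eq_norm]
    rw [← hpre, measure_preimage_add]
  set c := μ (closedBall (0:ℤ_[p]) ((p:ℝ)^(-(n:ℤ)))) with hc
  have hunion : (Set.univ : Set ℤ_[p]) =
      ⋃ a ∈ Finset.Ico (0:ℤ) ((p:ℤ)^n), closedBall (a : ℤ_[p]) ((p:ℝ)^(-(n:ℤ))) := by
    refine subset_antisymm (fun z _ => ?_) (subset_univ _)
    obtain ⟨a, ha, hz⟩ := ball_cover p n z
    exact Set.mem_biUnion (Finset.mem_Ico.mpr ha) hz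
  have hμunion : (1:ℝ≥0∞) = ∑ a ∈ Finset.Ico (0:ℤ) ((p:ℤ)^n),
      μ (closedBall (a : ℤ_[p]) ((p:ℝ)^(-(n:ℤ)))) := by
    rw [← measure_univ (μ := μ), hunion]
    exact measure_biUnion_finset (pairwise_disjoint_balls p n)
      (fun a _ => measurableSet_closedBall)
  have hcard : (Finset.Ico (0:ℤ) ((p:ℤ)^n)).card = p ^ n := by
    rw [Int.card_Ico, sub_zero]
    have : ((p:ℤ))^n = ((p^n : ℕ) : ℤ) := by push_cast; ring
    rw [this, Int.toNat_natCast]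
  have hconst : ∑ a ∈ Finset.Ico (0:ℤ) ((p:ℤ)^n),
      μ (closedBall (a : ℤ_[p]) ((p:ℝ)^(-(n:ℤ)))) = ∑ _a ∈ Finset.Ico (0:ℤ) ((p:ℤ)^n), c :=
    Finset.sum_congr rfl (fun a _ => htrans _)
  have hsum : (1:ℝ≥0∞) = (p : ℝ≥0∞) ^ n * c := by
    rw [hμunion, hconst, Finset.sum_const, hcard, nsmul_eq_mul]
    push_cast
    ring
  have hpn0 : ((p:ℝ≥0∞) ^ n) ≠ 0 :=
    pow_ne_zero n (by exact_mod_cast hppos.ne')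
  have hpnt : ((p:ℝ≥0∞) ^ n) ≠ ⊤ := ENNReal.pow_ne_top (ENNReal.natCast_ne_top p)
  have hcval : c = ((p:ℝ≥0∞) ^ n)⁻¹ := by
    have h2 := hsum.symm
    rw [← ENNReal.eq_div_iff hpn0 hpnt] at h2
    rw [h2, ENNReal.div_eq_inv_mul, mul_one]
  rw [htrans x, hcval]

def resSetS (F : Set ℤ_[p]) (n : ℕ) : Set ℤ :=
  {a : ℤ | (0 ≤ a ∧ a < (p:ℤ)^n) ∧ (closedBall (a : ℤ_[p]) ((p:ℝ)^(-(n:ℤ))) ∩ F).Nonempty}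

lemma resSetS_finite (F : Set ℤ_[p]) (n : ℕ) : (resSetS p F n).Finite := by
  refine Set.Finite.subset (Set.finite_Ico (0:ℤ) ((p:ℤ)^n)) ?_
  rintro a ⟨⟨h1, h2⟩, _⟩
  exact ⟨h1, h2⟩

def resSet (F : Set ℤ_[p]) (n : ℕ) : Finset ℤ := (resSetS_finite p F n).toFinset

lemma mem_resSet {F : Set ℤ_[p]} {n : ℕ} {a : ℤ} :
    a ∈ resSet p F n ↔
      (0 ≤ a ∧ a < (p:ℤ)^n) ∧ (closedBall (a : ℤ_[p]) ((p:ℝ)^(-(n:ℤ))) ∩ F).Nonempty := by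
  rw [resSet, Set.Finite.mem_toFinset]
  rfl

def thick (F : Set ℤ_[p]) (n : ℕ) : Set ℤ_[p] :=
  ⋃ y ∈ F, closedBall y ((p:ℝ)^(-(n:ℤ)))

lemma thick_eq (F : Set ℤ_[p]) (n : ℕ) :
    thick p F n = ⋃ a ∈ resSet p F n, closedBall (a : ℤ_[p]) ((p:ℝ)^(-(n:ℤ))) := by
  apply subset_antisymm
  · rintro z hz
    rw [thick, Set.mem_iUnion₂] at hz
    obtain ⟨y, hyF, hzy⟩ := hz
    obtain ⟨a, ha, hya⟩ := ball_cover p n y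
    have hball : closedBall (y : ℤ_[p]) ((p:ℝ)^(-(n:ℤ)))
        = closedBall (a : ℤ_[p]) ((p:ℝ)^(-(n:ℤ))) := by
      apply ball_eq
      rw [mem_closedBall, dist_eq_norm] at hya
      exact hya
    refine Set.mem_biUnion ((mem_resSet p).mpr ⟨ha, ⟨y, hya, hyF⟩⟩) (hball ▸ hzy)
  · rintro z hz
    rw [Set.mem_iUnion₂] at hz
    obtain ⟨a, ha, hza⟩ := hz
    obtain ⟨y, hya, hyF⟩ := ((mem_resSet p).mp ha).2
    have hball : closedBall ((a:ℤ) : ℤ_[p]) ((p:ℝ)^(-(n:ℤ)))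
        = closedBall (y : ℤ_[p]) ((p:ℝ)^(-(n:ℤ))) := by
      apply ball_eq
      rw [mem_closedBall, dist_eq_norm] at hya
      rw [norm_sub_rev]
      exact hya
    exact Set.mem_biUnion hyF (hball ▸ hza)

lemma measure_thick (F : Set ℤ_[p]) (n : ℕ)
    (μ : Measure ℤ_[p]) [μ.IsAddHaarMeasure] [IsProbabilityMeasure μ] :
    μ (thick p F n) = ((resSet p F n).card : ℝ≥0∞) * ((p : ℝ≥0∞) ^ n)⁻¹ := by
  rw [thick_eq]
  rw [measure_biUnion_finset
    ((pairwise_disjoint_balls p n).subset (by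
      intro a ha
      rw [Finset.mem_coe, mem_resSet] at ha
      rw [Finset.coe_Ico, Set.mem_Ico]
      exact ha.1))
    (fun a _ => measurableSet_closedBall)]
  have hconst : ∑ a ∈ resSet p F n, μ (closedBall (a : ℤ_[p]) ((p:ℝ)^(-(n:ℤ))))
      = ∑ _a ∈ resSet p F n, ((p : ℝ≥0∞) ^ n)⁻¹ :=
    Finset.sum_congr rfl (fun a _ => measure_ball p μ _ n)
  rw [hconst, Finset.sum_const, nsmul_eq_mul]

lemma cnt_le (F : Set ℤ_[p]) (n : ℕ) (M : ℤ) (N : ℕ) :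
    cnt (proj p F) M N ≤ (resSet p F n).card * (N / p ^ n + 1) := by
  set q : ℕ := p ^ n with hqdef
  have hq : 0 < q := pow_pos (Fact.out : p.Prime).pos n
  have hqz : (0:ℤ) < (q:ℤ) := by exact_mod_cast hq
  have hcast : ((p:ℤ))^n = (q:ℤ) := by rw [hqdef]; push_cast; ring
  have key : cnt (proj p F) M N ≤ ((resSet p F n) ×ˢ (Finset.range (N / q + 1))).card := by
    rw [cnt, ← Set.ncard_coe_finset]
    refine Set.ncard_le_ncard_of_injOn
      (fun m => (m % (q:ℤ), ((m - (M+1)) / (q:ℤ)).toNat)) ?_ ?_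
      ((resSet p F n) ×ˢ (Finset.range (N / q + 1)) : Finset (ℤ × ℕ)).finite_toSet
    · rintro m ⟨hmF, hmI⟩
      rw [Set.mem_Ioc] at hmI
      rw [Finset.coe_product, Set.mem_prod]
      constructor
      · rw [Finset.mem_coe, mem_resSet]
        refine ⟨⟨Int.emod_nonneg m (ne_of_gt hqz), ?_⟩, ?_⟩
        · rw [hcast]; exact Int.emod_lt_of_pos m hqz
        · refine ⟨(m : ℤ_[p]), ?_, hmF⟩
          rw [int_mem_ball]
          refine ⟨m / (q:ℤ), ?_⟩
          have h1 := Int.emod_def m (q:ℤ)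
          have : ((p:ℤ))^n = (q:ℤ) := hcast
          push_cast at this ⊢
          rw [this]
          omega
      · rw [Finset.mem_coe, Finset.mem_range, Nat.lt_succ_iff, Int.toNat_le]
        have h2 : (m - (M+1)) ≤ (N:ℤ) - 1 := by omega
        calc (m - (M+1)) / (q:ℤ) ≤ ((N:ℤ) - 1) / (q:ℤ) :=
              Int.ediv_le_ediv hqz h2
          _ ≤ (N:ℤ) / (q:ℤ) := Int.ediv_le_ediv hqz (by omega)
          _ = ((N / q : ℕ) : ℤ) := (Int.natCast_div N q).symm
    · rintro m₁ ⟨_, hmI₁⟩ m₂ ⟨_, hmI₂⟩ heq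
      rw [Set.mem_Ioc] at hmI₁ hmI₂
      simp only [Prod.mk.injEq] at heq
      obtain ⟨hfst, hsnd⟩ := heq
      have hn₁ : 0 ≤ (m₁ - (M+1)) / (q:ℤ) := Int.ediv_nonneg (by omega) (le_of_lt hqz)
      have hn₂ : 0 ≤ (m₂ - (M+1)) / (q:ℤ) := Int.ediv_nonneg (by omega) (le_of_lt hqz)
      have hsnd' : (m₁ - (M+1)) / (q:ℤ) = (m₂ - (M+1)) / (q:ℤ) := by
        rw [← Int.toNat_of_nonneg hn₁, ← Int.toNat_of_nonneg hn₂, hsnd]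
      have hdvd : (q:ℤ) ∣ m₂ - m₁ := Int.ModEq.dvd hfst
      have he₁ := Int.emod_def (m₁ - (M+1)) (q:ℤ)
      have he₂ := Int.emod_def (m₂ - (M+1)) (q:ℤ)
      have hr₁ : 0 ≤ (m₁ - (M+1)) % (q:ℤ) := Int.emod_nonneg _ (ne_of_gt hqz)
      have hr₂ : 0 ≤ (m₂ - (M+1)) % (q:ℤ) := Int.emod_nonneg _ (ne_of_gt hqz)
      have hr₁' : (m₁ - (M+1)) % (q:ℤ) < (q:ℤ) := Int.emod_lt_of_pos _ hqz
      have hr₂' : (m₂ - (M+1)) % (q:ℤ) < (q:ℤ) := Int.emod_lt_of_pos _ hqz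
      have hmul : (q:ℤ) * ((m₁-(M+1))/(q:ℤ)) = (q:ℤ) * ((m₂-(M+1))/(q:ℤ)) := by rw [hsnd']
      have habs : |m₂ - m₁| < (q:ℤ) := by
        rw [abs_lt]
        constructor <;> omega
      have := Int.eq_zero_of_abs_lt_dvd hdvd habs
      omega
  calc cnt (proj p F) M N ≤ _ := key
    _ = (resSet p F n).card * (N / p ^ n + 1) := by
        rw [Finset.card_product, Finset.card_range]

lemma ubd_le (F : Set ℤ_[p]) (n : ℕ) :
    upperBanachDensity (proj p F) ≤ ((resSet p F n).card : ℝ≥0∞) * ((p : ℝ≥0∞) ^ n)⁻¹ := by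
  have hppos := (Fact.out : p.Prime).pos
  set K : ℝ≥0∞ := ((resSet p F n).card : ℝ≥0∞) with hK
  set q : ℕ := p ^ n with hq
  have hqpos : 0 < q := pow_pos hppos n
  have hq0 : (q:ℝ≥0∞) ≠ 0 := by exact_mod_cast hqpos.ne'
  have hqt : (q:ℝ≥0∞) ≠ ⊤ := ENNReal.natCast_ne_top q
  have hKt : K ≠ ⊤ := ENNReal.natCast_ne_top _
  have key : ∀ N : ℕ, (⨆ M : ℤ, (cnt (proj p F) M N : ℝ≥0∞) / (N : ℝ≥0∞) ^ (1:ℝ))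
      ≤ K / q + K / N := by
    intro N
    rw [iSup_le_iff]
    intro M
    rw [ENNReal.rpow_one]
    rcases Nat.eq_zero_or_pos N with h0 | hNpos
    · subst h0
      have hc : cnt (proj p F) M 0 = 0 := by
        rw [cnt]
        simp
      simp [hc]
    · have hN0 : (N:ℝ≥0∞) ≠ 0 := by exact_mod_cast hNpos.ne'
      have hNt : (N:ℝ≥0∞) ≠ ⊤ := ENNReal.natCast_ne_top N
      rw [ENNReal.div_le_iff hN0 hNt, add_mul]
      have h1 : K / (N:ℝ≥0∞) * N = K := ENNReal.div_mul_cancel hN0 hNt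
      have h2 : K / (q:ℝ≥0∞) * N = K * ((N:ℝ≥0∞) / q) := by
        rw [div_eq_mul_inv, div_eq_mul_inv, mul_assoc, mul_comm ((q:ℝ≥0∞))⁻¹ (N:ℝ≥0∞)]
      rw [h1, h2]
      calc (cnt (proj p F) M N : ℝ≥0∞)
          ≤ (((resSet p F n).card * (N / q + 1) : ℕ) : ℝ≥0∞) := by
            exact_mod_cast cnt_le p F n M N
        _ = K * ((N/q : ℕ) : ℝ≥0∞) + K := by push_cast; ring
        _ ≤ K * ((N:ℝ≥0∞)/q) + K := by
            gcongr
            rw [ENNReal.le_div_iff_mul_le (Or.inl hq0) (Or.inl hqt)]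
            exact_mod_cast Nat.div_mul_le_self N q
  have hlim : Tendsto (fun N : ℕ => K/q + K/(N:ℝ≥0∞)) atTop (𝓝 (K/q + 0)) := by
    refine Tendsto.const_add _ ?_
    have hfun : (fun N:ℕ => K / (N:ℝ≥0∞)) = fun N:ℕ => K * ((N:ℝ≥0∞))⁻¹ := by
      funext N
      rw [div_eq_mul_inv]
    rw [hfun]
    simpa using ENNReal.Tendsto.const_mul ENNReal.tendsto_inv_nat_nhds_zero (Or.inr hKt)
  calc upperBanachDensity (proj p F)
      ≤ Filter.atTop.limsup (fun N:ℕ => K/q + K/(N:ℝ≥0∞)) := by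
        rw [upperBanachDensity, countingMeasure]
        exact Filter.limsup_le_limsup (Filter.Eventually.of_forall key)
    _ = K/q + 0 := hlim.limsup_eq
    _ = K * ((p : ℝ≥0∞) ^ n)⁻¹ := by
        rw [add_zero, div_eq_mul_inv]
        congr 1
        rw [hq]
        push_cast
        ring

end BDH

/-- If `F ⊆ ℤ_p` is closed, then `d*(F ∩ ℤ) ≤ μ_p(F)` where `μ_p` is the
Haar probability measure on `ℤ_p`. -/


theorem banachDensity_le_haar (F : Set ℤ_[p]) (hF : IsClosed F)
    (μ : Measure ℤ_[p]) [μ.IsAddHaarMeasure] [IsProbabilityMeasure μ] :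
    upperBanachDensity (proj p F) ≤ μ F := by
  have h1 : ∀ n : ℕ, upperBanachDensity (proj p F) ≤ μ (BDH.thick p F n) := by
    intro n
    rw [BDH.measure_thick]
    exact BDH.ubd_le p F n
  have hmeas : ∀ n : ℕ, NullMeasurableSet (BDH.thick p F n) μ := by
    intro n
    rw [BDH.thick_eq]
    exact (Finset.measurableSet_biUnion _
      (fun b _ => measurableSet_closedBall)).nullMeasurableSet
  have hanti : Antitone (fun n => BDH.thick p F n) := by
    intro n m hnm
    refine Set.iUnion₂_mono fun y _ => ?_
    apply closedBall_subset_closedBall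
    have hp1 : (1:ℝ) ≤ (p:ℝ) := by exact_mod_cast (Fact.out : p.Prime).one_lt.le
    gcongr
  have hint : (⋂ n, BDH.thick p F n) ⊆ F := by
    intro x hx
    rw [Set.mem_iInter] at hx
    rw [← hF.closure_eq]
    rw [Metric.mem_closure_iff]
    intro ε hε
    have hp1 : (1:ℝ) < (p:ℝ) := by exact_mod_cast (Fact.out : p.Prime).one_lt
    obtain ⟨n, hn⟩ : ∃ n : ℕ, ((p:ℝ)⁻¹)^n < ε :=
      exists_pow_lt_of_lt_one hε (inv_lt_one_of_one_lt₀ hp1)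
    have hx' := hx n
    rw [BDH.thick, Set.mem_iUnion₂] at hx'
    obtain ⟨y, hyF, hxy⟩ := hx'
    rw [mem_closedBall] at hxy
    refine ⟨y, hyF, lt_of_le_of_lt (le_trans hxy (le_of_eq ?_)) hn⟩
    rw [zpow_neg, zpow_natCast, inv_pow]
  have htend := tendsto_measure_iInter_atTop hmeas hanti ⟨0, measure_ne_top μ _⟩
  have hle : upperBanachDensity (proj p F) ≤ μ (⋂ n, BDH.thick p F n) :=
    ge_of_tendsto' htend h1
  exact hle.trans (measure_mono hint)


end
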